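/- arXiv:2302.05183 — 3 statements merged into one kernel-verified Lean document; each statement's English description precedes it below -/
import Mathlib

section
/- Existence of continuous nowhere Hölder functions (consequence of Theorem 2.5 noted in Remark 2.7). There exists a continuous function f : ℝ → ℝ that is nowhere Hölder continuous: for every x ∈ ℝ, every exponent α ∈ (0,1), every constant C > 0 and every δ > 0, there exists y with 0 < |y − x| < δ and |f(x) − f(y)| > C |x − y|^α. -/
open scoped Real

noncomputable section

namespace NowhereHolder

open Real Finset

/-- amplitudes of the lacunary series -/
def A (k : ℕ) : ℝ := (8 : ℝ)⁻¹ ^ k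
/-- frequencies of the lacunary series -/
def B (k : ℕ) : ℝ := (2 : ℝ) ^ (k ^ 2)
/-- a continuous nowhere Hölder function -/
def F (x : ℝ) : ℝ := ∑' k : ℕ, A k * Real.cos (B k * x)

lemma A_pos (k : ℕ) : 0 < A k := by unfold A; positivity
lemma B_pos (k : ℕ) : 0 < B k := by unfold B; positivity

lemma summable_A : Summable A :=
  summable_geometric_of_lt_one (by norm_num) (by norm_num)

lemma cos_lip (a b : ℝ) : |Real.cos a - Real.cos b| ≤ |a - b| := by
  rw [Real.cos_sub_cos]
  have h1 : |Real.sin ((a + b) / 2)| ≤ 1 := Real.abs_sin_le_one _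
  have h2 : |Real.sin ((a - b) / 2)| ≤ |(a - b) / 2| := Real.abs_sin_le_abs
  have h3 : |(a - b) / 2| = |a - b| / 2 := by rw [abs_div]; norm_num
  calc |-2 * Real.sin ((a + b) / 2) * Real.sin ((a - b) / 2)|
      = 2 * (|Real.sin ((a + b) / 2)| * |Real.sin ((a - b) / 2)|) := by
        rw [abs_mul, abs_mul]; norm_num; ring
    _ ≤ 2 * (1 * (|a - b| / 2)) := by
        apply mul_le_mul_of_nonneg_left _ (by norm_num)
        exact mul_le_mul h1 (h3 ▸ h2) (abs_nonneg _) zero_le_one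
    _ = |a - b| := by ring

lemma summand_bound (k : ℕ) (x : ℝ) : ‖A k * Real.cos (B k * x)‖ ≤ A k := by
  rw [Real.norm_eq_abs, abs_mul, abs_of_pos (A_pos k)]
  nlinarith [Real.abs_cos_le_one (B k * x), A_pos k, abs_nonneg (Real.cos (B k * x))]

lemma summable_F (x : ℝ) : Summable fun k => A k * Real.cos (B k * x) :=
  Summable.of_norm_bounded summable_A (fun k => summand_bound k x)

lemma continuous_F : Continuous F := by
  apply continuous_tsum (u := A)
  · intro k
    exact continuous_const.mul (Real.continuous_cos.comp (continuous_const.mul continuous_id))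
  · exact summable_A
  · intro k x; exact summand_bound k x

/-- oscillation lemma: near any point there is a point at the scale of the period
where cos(b·) moves by at least 1/2. -/
lemma exists_osc (b x : ℝ) (hb : 0 < b) :
    ∃ y : ℝ, π / (2 * b) ≤ |y - x| ∧ |y - x| ≤ π / b ∧
      1 / 2 ≤ |Real.cos (b * y) - Real.cos (b * x)| := by
  have hπ : (0:ℝ) < π := Real.pi_pos
  set θ := b * x with hθ
  by_cases hc : 1 / 2 ≤ |Real.cos θ|
  · refine ⟨x + π / b, ?_, ?_, ?_⟩
    · have : x + π / b - x = π / b := by ring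
      rw [this, abs_of_pos (by positivity)]
      rw [div_le_div_iff₀ (by positivity) (by positivity)]
      nlinarith
    · have : x + π / b - x = π / b := by ring
      rw [this, abs_of_pos (by positivity)]
    · have : b * (x + π / b) = θ + π := by rw [hθ]; field_simp
      rw [this, Real.cos_add_pi]
      rw [abs_sub_comm]
      have : Real.cos θ - -Real.cos θ = 2 * Real.cos θ := by ring
      rw [this, abs_mul]
      rw [abs_of_pos (by norm_num : (0:ℝ) < 2)]
      linarith
  · push_neg at hc
    have hs : 1 / 2 ≤ |Real.sin θ| := by
      have h1 := Real.sin_sq_add_cos_sq θ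
      have h2 : |Real.cos θ| ^ 2 = Real.cos θ ^ 2 := sq_abs _
      have h3 : |Real.sin θ| ^ 2 = Real.sin θ ^ 2 := sq_abs _
      nlinarith [abs_nonneg (Real.sin θ), abs_nonneg (Real.cos θ)]
    by_cases hsc : 0 ≤ Real.sin θ * Real.cos θ
    · refine ⟨x + π / (2 * b), ?_, ?_, ?_⟩
      · have : x + π / (2 * b) - x = π / (2 * b) := by ring
        rw [this, abs_of_pos (by positivity)]
      · have : x + π / (2 * b) - x = π / (2 * b) := by ring
        rw [this, abs_of_pos (by positivity)]
        rw [div_le_div_iff₀ (by positivity) (by positivity)]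
        nlinarith
      · have : b * (x + π / (2 * b)) = θ + π / 2 := by rw [hθ]; field_simp
        rw [this, Real.cos_add_pi_div_two]
        have h4 : |-Real.sin θ - Real.cos θ| = |Real.sin θ + Real.cos θ| := by
          rw [← abs_neg]; ring_nf
        rw [h4]
        have : |Real.sin θ| ≤ |Real.sin θ + Real.cos θ| :=
          sq_le_sq.1 (by nlinarith [sq_nonneg (Real.cos θ)])
        linarith
    · push_neg at hsc
      refine ⟨x - π / (2 * b), ?_, ?_, ?_⟩
      · have : x - π / (2 * b) - x = -(π / (2 * b)) := by ring
        rw [this, abs_neg, abs_of_pos (by positivity)]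
      · have : x - π / (2 * b) - x = -(π / (2 * b)) := by ring
        rw [this, abs_neg, abs_of_pos (by positivity)]
        rw [div_le_div_iff₀ (by positivity) (by positivity)]
        nlinarith
      · have : b * (x - π / (2 * b)) = θ - π / 2 := by rw [hθ]; field_simp
        rw [this, Real.cos_sub_pi_div_two]
        have : |Real.sin θ| ≤ |Real.sin θ - Real.cos θ| :=
          sq_le_sq.1 (by nlinarith [sq_nonneg (Real.cos θ)])
        linarith


set_option maxHeartbeats 800000 in
lemma est {m : ℕ} (hm : 7 ≤ m) (hm64 : 64 * (m + 1) ≤ 2 ^ (m + 1)) {x y : ℝ}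
    (hxy : |y - x| ≤ 4 / B (m + 1))
    (hosc : 1 / 2 ≤ |Real.cos (B (m + 1) * y) - Real.cos (B (m + 1) * x)|) :
    A (m + 1) / 10 ≤ |F y - F x| := by
  set g : ℕ → ℝ := fun k => A k * (Real.cos (B k * y) - Real.cos (B k * x)) with hg
  have hgb : ∀ k, ‖g k‖ ≤ 2 * A k := by
    intro k
    rw [hg]
    simp only [Real.norm_eq_abs, abs_mul, abs_of_pos (A_pos k)]
    have h1 : |Real.cos (B k * y) - Real.cos (B k * x)| ≤ 2 := by
      have := Real.abs_cos_le_one (B k * y)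
      have := Real.abs_cos_le_one (B k * x)
      linarith [abs_sub (Real.cos (B k * y)) (Real.cos (B k * x))]
    nlinarith [A_pos k, abs_nonneg (Real.cos (B k * y) - Real.cos (B k * x))]
  have hgnorm : Summable fun k => ‖g k‖ :=
    Summable.of_nonneg_of_le (fun k => norm_nonneg _) hgb (summable_A.mul_left 2)
  have hsg : Summable g := hgnorm.of_norm
  have hFg : F y - F x = ∑' k, g k := by
    rw [F, F, ← Summable.tsum_sub (summable_F y) (summable_F x)]
    exact tsum_congr fun k => by rw [hg]; ring
  have hsplit := Summable.sum_add_tsum_nat_add (f := g) (m + 2) hsg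
  have hrange : ∑ i ∈ Finset.range (m + 2), g i
      = (∑ i ∈ Finset.range (m + 1), g i) + g (m + 1) := Finset.sum_range_succ g (m + 1)
  have hmain : A (m + 1) / 2 ≤ |g (m + 1)| := by
    rw [hg]
    simp only [abs_mul, abs_of_pos (A_pos (m + 1))]
    nlinarith [A_pos (m + 1)]
  -- head bound
  have hterm : ∀ i < m + 1, |g i| ≤ (2 : ℝ) ^ (m ^ 2) / 8 ^ m * |y - x| := by
    intro i hi
    have hi' : i ≤ m := by omega
    have h1 : |g i| ≤ A i * (B i * |y - x|) := by
      rw [hg]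
      simp only [abs_mul, abs_of_pos (A_pos i)]
      have h2 : |Real.cos (B i * y) - Real.cos (B i * x)| ≤ B i * |y - x| := by
        calc |Real.cos (B i * y) - Real.cos (B i * x)| ≤ |B i * y - B i * x| := cos_lip _ _
          _ = B i * |y - x| := by rw [← mul_sub, abs_mul, abs_of_pos (B_pos i)]
      exact mul_le_mul_of_nonneg_left h2 (A_pos i).le
    have hkey : A i * B i ≤ (2 : ℝ) ^ (m ^ 2) / 8 ^ m := by
      have hnat : i ^ 2 + 3 * m ≤ m ^ 2 + 3 * i := by nlinarith [hi', hm]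
      rw [A, B, inv_pow, inv_mul_eq_div, div_le_div_iff₀ (by positivity) (by positivity)]
      have e1 : (2 : ℝ) ^ (i ^ 2) * 8 ^ m = 2 ^ (i ^ 2 + 3 * m) := by
        rw [pow_add, pow_mul]; norm_num
      have e2 : (2 : ℝ) ^ (m ^ 2) * 8 ^ i = 2 ^ (m ^ 2 + 3 * i) := by
        rw [pow_add, pow_mul]; norm_num
      rw [e1, e2]
      exact pow_le_pow_right₀ one_le_two hnat
    calc |g i| ≤ A i * (B i * |y - x|) := h1
      _ = A i * B i * |y - x| := by ring
      _ ≤ (2 : ℝ) ^ (m ^ 2) / 8 ^ m * |y - x| :=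
        mul_le_mul_of_nonneg_right hkey (abs_nonneg _)
  have hhead : |∑ i ∈ Finset.range (m + 1), g i| ≤ A (m + 1) / 10 := by
    have h1 : |∑ i ∈ Finset.range (m + 1), g i| ≤ ∑ i ∈ Finset.range (m + 1), |g i| :=
      Finset.abs_sum_le_sum_abs _ _
    have h2 : ∑ i ∈ Finset.range (m + 1), |g i|
        ≤ (m + 1 : ℝ) * ((2 : ℝ) ^ (m ^ 2) / 8 ^ m * |y - x|) := by
      calc ∑ i ∈ Finset.range (m + 1), |g i|
          ≤ ∑ _i ∈ Finset.range (m + 1), (2 : ℝ) ^ (m ^ 2) / 8 ^ m * |y - x| :=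
            Finset.sum_le_sum fun i hi => hterm i (Finset.mem_range.1 hi)
        _ = (m + 1 : ℝ) * ((2 : ℝ) ^ (m ^ 2) / 8 ^ m * |y - x|) := by
            rw [Finset.sum_const, Finset.card_range, nsmul_eq_mul]
            push_cast
            ring
    have hB : B (m + 1) = (2 : ℝ) ^ (m ^ 2) * 2 ^ (2 * m + 1) := by
      rw [B, ← pow_add]
      congr 1
      ring
    have hyx' : |y - x| ≤ 4 / ((2 : ℝ) ^ (m ^ 2) * 2 ^ (2 * m + 1)) := by rwa [hB] at hxy
    have hQ : (320 : ℝ) * (m + 1) ≤ 2 ^ (2 * m + 1) := by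
      have h5 : (8 : ℝ) ≤ 2 ^ m := by
        calc (8 : ℝ) = 2 ^ 3 := by norm_num
          _ ≤ 2 ^ m := pow_le_pow_right₀ one_le_two (by omega)
      have h64 : (64 : ℝ) * (m + 1) ≤ 2 ^ (m + 1) := by exact_mod_cast hm64
      have he : (2 : ℝ) ^ (2 * m + 1) = 2 ^ m * 2 ^ (m + 1) := by rw [← pow_add]; congr 1; omega
      rw [he]
      nlinarith [pow_pos (by norm_num : (0:ℝ) < 2) (m + 1), pow_pos (by norm_num : (0:ℝ) < 2) m]
    have h3 : (m + 1 : ℝ) * ((2 : ℝ) ^ (m ^ 2) / 8 ^ m * |y - x|) ≤ A (m + 1) / 10 := by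
      have hA : A (m + 1) = 1 / (8 ^ m * 8) := by
        rw [A, inv_pow, one_div, pow_succ]
      calc (m + 1 : ℝ) * ((2 : ℝ) ^ (m ^ 2) / 8 ^ m * |y - x|)
          ≤ (m + 1 : ℝ) * ((2 : ℝ) ^ (m ^ 2) / 8 ^ m * (4 / ((2 : ℝ) ^ (m ^ 2) * 2 ^ (2 * m + 1)))) := by
            apply mul_le_mul_of_nonneg_left _ (by positivity)
            exact mul_le_mul_of_nonneg_left hyx' (by positivity)
        _ = 4 * (m + 1 : ℝ) / (8 ^ m * 2 ^ (2 * m + 1)) := by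
            field_simp
        _ ≤ A (m + 1) / 10 := by
            rw [hA, div_le_div_iff₀ (by positivity) (by positivity)]
            have e3 : (1:ℝ) / (8 ^ m * 8) * (8 ^ m * 2 ^ (2 * m + 1)) = 2 ^ (2 * m + 1) / 8 := by
              field_simp
            rw [e3]
            linarith
    linarith
  -- tail bound
  have htail : |∑' i, g (i + (m + 2))| ≤ 2 / 7 * A (m + 1) := by
    have hs2 : Summable fun i => ‖g (i + (m + 2))‖ := (summable_nat_add_iff (m + 2)).2 hgnorm
    have hb : ∀ i, ‖g (i + (m + 2))‖ ≤ 2 * A (m + 2) * (8 : ℝ)⁻¹ ^ i := by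
      intro i
      have hAe : A (i + (m + 2)) = A (m + 2) * (8 : ℝ)⁻¹ ^ i := by
        rw [A, A, pow_add]; ring
      calc ‖g (i + (m + 2))‖ ≤ 2 * A (i + (m + 2)) := hgb _
        _ = 2 * A (m + 2) * (8 : ℝ)⁻¹ ^ i := by rw [hAe]; ring
    have hs3 : Summable fun i => 2 * A (m + 2) * (8 : ℝ)⁻¹ ^ i :=
      (summable_geometric_of_lt_one (by norm_num) (by norm_num)).mul_left _
    calc |∑' i, g (i + (m + 2))| ≤ ∑' i, ‖g (i + (m + 2))‖ := norm_tsum_le_tsum_norm hs2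
      _ ≤ ∑' i, 2 * A (m + 2) * (8 : ℝ)⁻¹ ^ i := Summable.tsum_le_tsum hb hs2 hs3
      _ = 2 * A (m + 2) * (1 - 8⁻¹)⁻¹ := by
          rw [tsum_mul_left, tsum_geometric_of_lt_one (by norm_num) (by norm_num)]
      _ = 2 / 7 * A (m + 1) := by
          rw [A, A, pow_succ]
          ring
  -- combine
  have hdecomp : F y - F x
      = (∑ i ∈ Finset.range (m + 1), g i) + g (m + 1) + ∑' i, g (i + (m + 2)) := by
    rw [hFg, ← hsplit, hrange]
  set S := ∑ i ∈ Finset.range (m + 1), g i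
  set T := ∑' i, g (i + (m + 2))
  have hlow : |g (m + 1)| ≤ |S + g (m + 1) + T| + |S| + |T| := by
    calc |g (m + 1)| = |(S + g (m + 1) + T) - S - T| := by congr 1; ring
      _ ≤ |(S + g (m + 1) + T) - S| + |T| := abs_sub _ _
      _ ≤ (|S + g (m + 1) + T| + |S|) + |T| := add_le_add_left (abs_sub _ _) _
  rw [hdecomp]
  linarith [A_pos (m + 1)]


lemma pow_aux {n : ℕ} (hn : 12 ≤ n) : 64 * n ≤ 2 ^ n := by
  induction n, hn using Nat.le_induction with
  | base => norm_num
  | succ n hn ih =>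
    have h64 : 64 ≤ 2 ^ n := by
      calc (64 : ℕ) = 2 ^ 6 := by norm_num
        _ ≤ 2 ^ n := Nat.pow_le_pow_right (by norm_num) (by omega)
    calc 64 * (n + 1) = 64 * n + 64 := by ring
      _ ≤ 2 ^ n + 2 ^ n := add_le_add ih h64
      _ = 2 ^ (n + 1) := by rw [pow_succ]; ring


end NowhereHolder

open NowhereHolder

set_option maxHeartbeats 1200000 in
/-- There exists a continuous function `f : ℝ → ℝ` that is nowhere Hölder continuous:
at every point, for every exponent `α ∈ (0,1)`, every constant `C > 0` and every
neighborhood, the Hölder bound fails. -/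
theorem exists_continuous_nowhere_holder :
    ∃ f : ℝ → ℝ, Continuous f ∧
      ∀ x : ℝ, ∀ α ∈ Set.Ioo (0 : ℝ) 1, ∀ C > 0, ∀ δ > 0,
        ∃ y : ℝ, 0 < |y - x| ∧ |y - x| < δ ∧ C * |x - y| ^ α < |f x - f y| := by
  refine ⟨F, continuous_F, ?_⟩
  intro x α hα C hC δ hδ
  obtain ⟨hα0, hα1⟩ := hα
  obtain ⟨M, hM⟩ := exists_nat_gt (5 / α)
  obtain ⟨p, hp⟩ := pow_unbounded_of_one_lt (10 * C) (by norm_num : (1:ℝ) < 2)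
  obtain ⟨L, hL⟩ := pow_unbounded_of_one_lt (4 / δ) (by norm_num : (1:ℝ) < 2)
  obtain ⟨m, hmdef⟩ : ∃ m : ℕ, m = M + p + L + 11 := ⟨_, rfl⟩
  obtain ⟨n, hndef⟩ : ∃ n : ℕ, n = m + 1 := ⟨_, rfl⟩
  have hn12 : 12 ≤ n := by omega
  -- note: omega uses hmdef hndef
  have hm7 : 7 ≤ m := by omega
  have hb : 0 < B n := B_pos n
  obtain ⟨y, hy1, hy2, hy3⟩ := exists_osc (B n) x hb
  have hπ4 : π ≤ 4 := by linarith [Real.pi_le_four]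
  have hyx4 : |y - x| ≤ 4 / B n := hy2.trans (by gcongr)
  have hBn_big : (2 : ℝ) ^ n ≤ B n := by
    rw [B]
    apply pow_le_pow_right₀ one_le_two
    nlinarith [hn12]
  have h0 : 0 < |y - x| := lt_of_lt_of_le (by positivity) hy1
  have hδ' : |y - x| < δ := by
    have hL' : 4 / δ < B n := lt_of_lt_of_le (lt_of_lt_of_le hL (by
      exact_mod_cast pow_le_pow_right₀ one_le_two (by omega : L ≤ n))) hBn_big
    have h4b : 4 / B n < δ := by
      rw [div_lt_iff₀ hb]
      rw [div_lt_iff₀ hδ] at hL'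
      nlinarith
    linarith
  refine ⟨y, h0, hδ', ?_⟩
  have hest : A n / 10 ≤ |F y - F x| := by
    rw [hndef]
    exact est hm7 (by rw [← hndef]; exact pow_aux hn12) (by rw [← hndef]; exact hyx4)
      (by rw [← hndef]; exact hy3)
  obtain ⟨N, hN⟩ : ∃ N : ℕ, N = n ^ 2 := ⟨_, rfl⟩
  have hN4 : 4 ≤ N := by rw [hN]; exact le_trans (by norm_num) (Nat.pow_le_pow_left hn12 2)
  have epow : (2 : ℝ) ^ (N - 2) * 4 = 2 ^ N := by
    rw [show (4:ℝ) = 2 ^ 2 by norm_num, ← pow_add]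
    congr 1
    omega
  have e4 : (4 : ℝ) / B n = (2 : ℝ)⁻¹ ^ (N - 2) := by
    rw [B, inv_pow, eq_comm, inv_eq_iff_eq_inv, inv_div, eq_div_iff (by norm_num : (4:ℝ) ≠ 0),
      ← hN]
    exact epow
  rw [abs_sub_comm x y, abs_sub_comm (F x) (F y)]
  have h1 : |y - x| ^ α ≤ ((2:ℝ)⁻¹ ^ (N - 2)) ^ α := by
    rw [← e4]
    exact Real.rpow_le_rpow (abs_nonneg _) hyx4 hα0.le
  have h2 : ((2:ℝ)⁻¹ ^ (N - 2) : ℝ) ^ α = (2:ℝ)⁻¹ ^ (((N - 2 : ℕ) : ℝ) * α) := by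
    rw [← Real.rpow_natCast (2:ℝ)⁻¹ (N - 2), ← Real.rpow_mul (by norm_num)]
  have hexp : (((3 * n + p : ℕ)) : ℝ) ≤ ((N - 2 : ℕ) : ℝ) * α := by
    have hcast : ((N - 2 : ℕ) : ℝ) = (n:ℝ) ^ 2 - 2 := by
      rw [Nat.cast_sub (by omega), hN]
      push_cast
      ring
    have hαn : 5 ≤ α * n := by
      have hMn : (M:ℝ) ≤ n := by exact_mod_cast (by omega : M ≤ n)
      have h5 : 5 / α < (n:ℝ) := lt_of_lt_of_le hM hMn
      rw [div_lt_iff₀ hα0] at h5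
      nlinarith
    have hpn : (p:ℝ) + 2 ≤ n := by exact_mod_cast (by omega : p + 2 ≤ n)
    have hn0 : (12:ℝ) ≤ n := by exact_mod_cast hn12
    rw [hcast]
    push_cast
    nlinarith [hα0, hα1]
  have h3 : (2:ℝ)⁻¹ ^ (((N - 2 : ℕ) : ℝ) * α) ≤ (2:ℝ)⁻¹ ^ (((3 * n + p : ℕ)) : ℝ) :=
    Real.rpow_le_rpow_of_exponent_ge (by norm_num) (by norm_num) hexp
  have h4 : (2:ℝ)⁻¹ ^ (((3 * n + p : ℕ)) : ℝ) = (2:ℝ)⁻¹ ^ (3 * n) * (2:ℝ)⁻¹ ^ p := by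
    rw [Real.rpow_natCast, pow_add]
  have hA : A n = (2:ℝ)⁻¹ ^ (3 * n) := by
    rw [A, show ((8:ℝ)⁻¹) = (2:ℝ)⁻¹ ^ 3 by norm_num, ← pow_mul]
  have hCp : C * (2:ℝ)⁻¹ ^ p < 1 / 10 := by
    have hpp : (0:ℝ) < 2 ^ p := by positivity
    rw [inv_pow]
    rw [mul_inv_lt_iff₀ hpp]
    linarith
  have hpos3n : (0:ℝ) < (2:ℝ)⁻¹ ^ (3 * n) := by positivity
  calc C * |y - x| ^ α
      ≤ C * (((2:ℝ)⁻¹ ^ (N - 2)) ^ α) := mul_le_mul_of_nonneg_left h1 hC.le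
    _ = C * ((2:ℝ)⁻¹ ^ (((N - 2 : ℕ) : ℝ) * α)) := by rw [h2]
    _ ≤ C * ((2:ℝ)⁻¹ ^ (((3 * n + p : ℕ)) : ℝ)) := mul_le_mul_of_nonneg_left h3 hC.le
    _ = (C * (2:ℝ)⁻¹ ^ p) * (2:ℝ)⁻¹ ^ (3 * n) := by rw [h4]; ring
    _ < (1 / 10) * (2:ℝ)⁻¹ ^ (3 * n) := mul_lt_mul_of_pos_right hCp hpos3n
    _ = A n / 10 := by rw [hA]; ring
    _ ≤ |F y - F x| := hest
end
end

section
/- Solution and estimate for the homological difference equation (Lemma 4.3). Let n ≥ 1, γ > 0, τ > 0, K ≥ 1, and let ω ∈ ℝⁿ satisfy |⟨k,ω⟩ − 2πk₀| ≥ γ|k|^{−τ} for all k ∈ ℤⁿ with 0 < |k| ≤ K and all k₀ ∈ ℤ. Then: (a) |e^{i⟨k,ω⟩} − 1| ≥ (2/π) γ |k|^{−τ} for all such k; (b) for any complex coefficients (c_k)_{0<|k|≤K}, the trigonometric polynomial U(θ) = Σ_{0<|k|≤K} c_k (e^{i⟨k,ω⟩} − 1)^{−1} e^{i⟨k,θ⟩}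 is the unique trigonometric polynomial with zero mean and frequencies supported in {k : 0 < |k| ≤ K} solving U(θ + ω) − U(θ) = Σ_{0<|k|≤K} c_k e^{i⟨k,θ⟩} for all θ ∈ ℝⁿ; (c) if moreover |c_k| ≤ M e^{−|k| a} for some M ≥ 0, a > 0, then for every 0 ≤ b < a, sup_{θ∈ℂⁿ, |Im θ| ≤ b} |U(θ)| ≤ (π/2) γ^{−1} M Σ_{0<|k|≤K} |k|^τ e^{−|k|(a−b)}. -/
open scoped Real

noncomputable section

/-- The canonical solution of the homological difference equation: coefficients
`U_k = c_k / (e^{i⟨k,ω⟩} − 1)` for `0 < |k| ≤ K` (ℓ¹ norm), and `0` otherwise. -/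
def homSol (n : ℕ) (K : ℝ) (ω : Fin n → ℝ) (c : (Fin n → ℤ) → ℂ) : (Fin n → ℤ) → ℂ :=
  fun k =>
    if 0 < (∑ i, |(k i : ℝ)|) ∧ (∑ i, |(k i : ℝ)|) ≤ K then
      c k / (Complex.exp (Complex.I * ((∑ i, (k i : ℝ) * ω i : ℝ) : ℂ)) - 1)
    else 0

lemma norm_exp_I_sub_one (x : ℝ) :
    ‖Complex.exp (Complex.I * (x : ℂ)) - 1‖ = 2 * |Real.sin (x / 2)| := by
  have h1 : Complex.exp (Complex.I * (x : ℂ)) - 1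
      = Complex.exp (((x / 2 : ℝ) : ℂ) * Complex.I) *
        (Complex.exp (((x / 2 : ℝ) : ℂ) * Complex.I) -
          Complex.exp (-(((x / 2 : ℝ) : ℂ) * Complex.I))) := by
    rw [mul_sub, ← Complex.exp_add, ← Complex.exp_add]
    push_cast
    ring_nf
    simp [Complex.exp_zero, mul_comm]
    ring_nf
  have h2 : Complex.exp (((x / 2 : ℝ) : ℂ) * Complex.I) -
      Complex.exp (-(((x / 2 : ℝ) : ℂ) * Complex.I))
      = 2 * Complex.sin ((x / 2 : ℝ) : ℂ) * Complex.I := by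
    rw [neg_mul_eq_neg_mul, Complex.exp_mul_I, Complex.exp_mul_I, Complex.cos_neg,
      Complex.sin_neg]
    ring
  rw [h1, h2, norm_mul, Complex.norm_exp_ofReal_mul_I, one_mul, norm_mul, norm_mul,
    Complex.norm_I, mul_one, ← Complex.ofReal_sin]
  simp
  rw [show ((x:ℂ)/2) = ((x/2:ℝ):ℂ) by push_cast; ring, ← Complex.ofReal_sin,
    Complex.norm_real, Real.norm_eq_abs]
lemma divisor_lower (x d : ℝ) (h : ∀ k₀ : ℤ, d ≤ |x - 2 * π * (k₀ : ℝ)|) :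
    (2 / π) * d ≤ ‖Complex.exp (Complex.I * (x : ℂ)) - 1‖ := by
  have hπ : (0:ℝ) < π := Real.pi_pos
  set k₀ : ℤ := round (x / (2 * π)) with hk₀
  set t : ℝ := x / 2 - π * k₀ with ht
  have h2t : |x - 2 * π * k₀| = 2 * |t| := by
    rw [ht]
    rw [show x - 2 * π * ↑k₀ = 2 * (x / 2 - π * ↑k₀) by ring, abs_mul, abs_two]
  have htle : |t| ≤ π / 2 := by
    have := abs_sub_round (x / (2 * π))
    have ht2 : t = π * (x / (2 * π) - k₀) := by
      rw [ht]; field_simp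
    rw [ht2, abs_mul, abs_of_pos hπ]
    calc π * |x / (2 * π) - ↑k₀| ≤ π * (1/2) := by nlinarith [abs_nonneg (x / (2*π) - (k₀:ℝ))]
      _ = π / 2 := by ring
  have hsin : |Real.sin (x / 2)| = |Real.sin t| := by
    have : x / 2 = t + (k₀ : ℤ) * π := by rw [ht]; push_cast; ring
    rw [this, Real.sin_add_int_mul_pi, abs_mul]
    rcases Int.even_or_odd k₀ with he | ho
    · rw [he.neg_one_zpow]; simp
    · rw [ho.neg_one_zpow]; simp
  have hjordan : 2 / π * |t| ≤ |Real.sin t| := Real.mul_abs_le_abs_sin htle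
  have hd : d ≤ 2 * |t| := h2t ▸ h k₀
  rw [norm_exp_I_sub_one, hsin]
  calc 2 / π * d ≤ 2 / π * (2 * |t|) := by
        apply mul_le_mul_of_nonneg_left hd; positivity
    _ = 2 * (2 / π * |t|) := by ring
    _ ≤ 2 * |Real.sin t| := by linarith
noncomputable def expChar (n : ℕ) (k : Fin n → ℤ) : Multiplicative (Fin n → ℝ) →* ℂ where
  toFun θ := Complex.exp (Complex.I * ∑ i, (k i : ℂ) * ((Multiplicative.toAdd θ) i))
  map_one' := by simp
  map_mul' θ₁ θ₂ := by
    show Complex.exp (Complex.I * ∑ i, (k i : ℂ) *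
        (((Multiplicative.toAdd θ₁) i + (Multiplicative.toAdd θ₂) i : ℝ) : ℂ)) = _
    rw [← Complex.exp_add, ← mul_add, ← Finset.sum_add_distrib]
    congr 2
    apply Finset.sum_congr rfl
    intro i _
    push_cast; ring
lemma expChar_injective (n : ℕ) : Function.Injective (expChar n) := by
  intro k k' h
  funext i
  by_contra hne
  have hm : ((k i : ℝ) - k' i) ≠ 0 := by
    intro h0
    apply hne
    have : (k i : ℝ) = (k' i : ℝ) := by linarith
    exact_mod_cast this
  set x : ℝ := π / ((k i : ℝ) - k' i) with hx
  set θ : Fin n → ℝ := Pi.single i x with hθ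
  have h1 := congrFun (congrArg (fun f => f.toFun) h) (Multiplicative.ofAdd θ)
  simp only [expChar] at h1
  have hsum : ∀ m : Fin n → ℤ, (∑ j, (m j : ℂ) * ((Multiplicative.toAdd (Multiplicative.ofAdd θ)) j))
      = (m i : ℂ) * x := by
    intro m
    rw [show (Multiplicative.toAdd (Multiplicative.ofAdd θ)) = θ from rfl]
    rw [hθ]
    rw [Finset.sum_eq_single i]
    · simp
    · intro j _ hj; simp [Pi.single_eq_of_ne hj]
    · simp
  rw [hsum k, hsum k'] at h1
  have h2 : Complex.exp (Complex.I * ((k i : ℂ) * x) - Complex.I * ((k' i : ℂ) * x)) = 1 := by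
    rw [Complex.exp_sub, h1, div_self (Complex.exp_ne_zero _)]
  have h3 : Complex.I * ((k i : ℂ) * x) - Complex.I * ((k' i : ℂ) * x)
      = (π : ℂ) * Complex.I := by
    have hm' : ((k i : ℂ) - (k' i : ℂ)) ≠ 0 := by
      have := Complex.ofReal_ne_zero.mpr hm
      push_cast at this
      convert this using 2
    rw [hx]
    push_cast
    field_simp
  rw [h3, Complex.exp_pi_mul_I] at h2
  norm_num at h2
lemma expChar_linIndep (n : ℕ) :
    LinearIndependent ℂ (fun (k : Fin n → ℤ) => fun (θ : Fin n → ℝ) =>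
      Complex.exp (Complex.I * ∑ i, (k i : ℂ) * θ i)) := by
  have := (linearIndependent_monoidHom (Multiplicative (Fin n → ℝ)) ℂ).comp
    (expChar n) (expChar_injective n)
  exact this
lemma coeff_eq_zero {n : ℕ} (A : (Fin n → ℤ) → ℂ) (S : Finset (Fin n → ℤ))
    (h : ∀ θ : Fin n → ℝ,
      (∑ k ∈ S, A k * Complex.exp (Complex.I * ∑ i, (k i : ℂ) * θ i)) = 0) :
    ∀ k ∈ S, A k = 0 := by
  refine linearIndependent_iff'.mp (expChar_linIndep n) S A ?_
  funext θ
  simpa [Finset.sum_apply] using h θ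
def bigS (n : ℕ) (K : ℝ) : Finset (Fin n → ℤ) :=
  Fintype.piFinset fun _ => Finset.Icc (-(⌈K⌉₊ : ℤ)) (⌈K⌉₊ : ℤ)

lemma mem_bigS {n : ℕ} {K : ℝ} {k : Fin n → ℤ} (h : (∑ i, |(k i : ℝ)|) ≤ K) :
    k ∈ bigS n K := by
  rw [bigS, Fintype.mem_piFinset]
  intro i
  rw [Finset.mem_Icc, ← abs_le]
  have h1 : |(k i : ℝ)| ≤ K :=
    le_trans (Finset.single_le_sum (f := fun j => |(k j : ℝ)|)
      (fun j _ => abs_nonneg _) (Finset.mem_univ i)) h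
  have h2 : |(k i : ℝ)| ≤ (⌈K⌉₊ : ℝ) := h1.trans (Nat.le_ceil K)
  have h3 : ((|k i| : ℤ) : ℝ) ≤ ((⌈K⌉₊ : ℤ) : ℝ) := by push_cast; exact h2
  exact_mod_cast h3

/-- Lemma 4.3: under a Diophantine condition on `ω` up to order `K`,
(a) the divisors satisfy `|e^{i⟨k,ω⟩} − 1| ≥ (2/π)γ|k|^{−τ}`;
(b) for coefficients `c` supported on `0 < |k| ≤ K`, a coefficient family supported there
solves the difference equation `U(θ+ω) − U(θ) = Σ c_k e^{i⟨k,θ⟩}` iff it is `homSol`;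
(c) if `|c_k| ≤ M e^{−|k|a}`, then on `|Im θ| ≤ b < a` the solution obeys
`|U(θ)| ≤ (π/2) γ⁻¹ M Σ_{0<|k|≤K} |k|^τ e^{−|k|(a−b)}`. -/
theorem homological_equation_solution
    (n : ℕ) (hn : 1 ≤ n) (γ τ K : ℝ) (hγ : 0 < γ) (hτ : 0 < τ) (hK : 1 ≤ K)
    (ω : Fin n → ℝ)
    (hdio : ∀ k : Fin n → ℤ, 0 < (∑ i, |(k i : ℝ)|) → (∑ i, |(k i : ℝ)|) ≤ K →
      ∀ k₀ : ℤ, γ * (∑ i, |(k i : ℝ)|) ^ (-τ)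
        ≤ |(∑ i, (k i : ℝ) * ω i) - 2 * π * (k₀ : ℝ)|) :
    (∀ k : Fin n → ℤ, 0 < (∑ i, |(k i : ℝ)|) → (∑ i, |(k i : ℝ)|) ≤ K →
      (2 / π) * γ * (∑ i, |(k i : ℝ)|) ^ (-τ)
        ≤ ‖Complex.exp (Complex.I * ((∑ i, (k i : ℝ) * ω i : ℝ) : ℂ)) - 1‖) ∧
    ∀ c : (Fin n → ℤ) → ℂ,
      (∀ k : Fin n → ℤ, ¬(0 < (∑ i, |(k i : ℝ)|) ∧ (∑ i, |(k i : ℝ)|) ≤ K) → c k = 0) →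
      (∀ U : (Fin n → ℤ) → ℂ,
        ((∀ k : Fin n → ℤ,
            ¬(0 < (∑ i, |(k i : ℝ)|) ∧ (∑ i, |(k i : ℝ)|) ≤ K) → U k = 0) ∧
         (∀ θ : Fin n → ℝ,
            ((∑' k : Fin n → ℤ,
                U k * Complex.exp (Complex.I * ((∑ i, (k i : ℝ) * (θ i + ω i) : ℝ) : ℂ))) -
              ∑' k : Fin n → ℤ,
                U k * Complex.exp (Complex.I * ((∑ i, (k i : ℝ) * θ i : ℝ) : ℂ)))
            = ∑' k : Fin n → ℤ,
                c k * Complex.exp (Complex.I * ((∑ i, (k i : ℝ) * θ i : ℝ) : ℂ)))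
        ↔ U = homSol n K ω c)) ∧
      ∀ M a : ℝ, 0 ≤ M → 0 < a →
        (∀ k : Fin n → ℤ, ‖c k‖ ≤ M * Real.exp (-((∑ i, |(k i : ℝ)|) * a))) →
        ∀ b : ℝ, 0 ≤ b → b < a →
          ∀ θ : Fin n → ℂ, (∑ i, |(θ i).im|) ≤ b →
            ‖∑' k : Fin n → ℤ,
                homSol n K ω c k * Complex.exp (Complex.I * ∑ i, (k i : ℂ) * θ i)‖
              ≤ (π / 2) * γ⁻¹ * M *
                ∑' k : Fin n → ℤ,
                  (if 0 < (∑ i, |(k i : ℝ)|) ∧ (∑ i, |(k i : ℝ)|) ≤ K then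
                    (∑ i, |(k i : ℝ)|) ^ τ * Real.exp (-((∑ i, |(k i : ℝ)|) * (a - b)))
                  else 0) := by
  have hπ : (0 : ℝ) < π := Real.pi_pos
  -- part (a)
  have parta : ∀ k : Fin n → ℤ, 0 < (∑ i, |(k i : ℝ)|) → (∑ i, |(k i : ℝ)|) ≤ K →
      (2 / π) * γ * (∑ i, |(k i : ℝ)|) ^ (-τ)
        ≤ ‖Complex.exp (Complex.I * ((∑ i, (k i : ℝ) * ω i : ℝ) : ℂ)) - 1‖ := by
    intro k h1 h2
    have := divisor_lower (∑ i, (k i : ℝ) * ω i) (γ * (∑ i, |(k i : ℝ)|) ^ (-τ))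
      (hdio k h1 h2)
    linarith [this]
  -- divisor nonzero
  have hdne : ∀ k : Fin n → ℤ, 0 < (∑ i, |(k i : ℝ)|) → (∑ i, |(k i : ℝ)|) ≤ K →
      Complex.exp (Complex.I * ((∑ i, (k i : ℝ) * ω i : ℝ) : ℂ)) - 1 ≠ 0 := by
    intro k h1 h2
    have hb := parta k h1 h2
    have hpos : 0 < (2 / π) * γ * (∑ i, |(k i : ℝ)|) ^ (-τ) := by
      apply mul_pos (mul_pos (by positivity) hγ) (Real.rpow_pos_of_pos h1 _)
    intro h0
    rw [h0, norm_zero] at hb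
    linarith
  refine ⟨parta, ?_⟩
  intro c hc
  constructor
  · -- part (b)
    intro U
    constructor
    · rintro ⟨hUsupp, heq⟩
      -- extract coefficient identity via linear independence
      have claim : ∀ θ : Fin n → ℝ,
          (∑ k ∈ bigS n K, (U k *
              (Complex.exp (Complex.I * ((∑ i, (k i : ℝ) * ω i : ℝ) : ℂ)) - 1) - c k) *
            Complex.exp (Complex.I * ∑ i, (k i : ℂ) * θ i)) = 0 := by
        intro θ
        have hmem : ∀ k : Fin n → ℤ, k ∉ bigS n K →
            ¬(0 < (∑ i, |(k i : ℝ)|) ∧ (∑ i, |(k i : ℝ)|) ≤ K) := by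
          intro k hk hP
          exact hk (mem_bigS hP.2)
        have hcast : ∀ k : Fin n → ℤ,
            Complex.exp (Complex.I * ((∑ i, (k i : ℝ) * θ i : ℝ) : ℂ))
            = Complex.exp (Complex.I * ∑ i, (k i : ℂ) * θ i) := by
          intro k; congr 1; push_cast; ring
        have h1 : (∑' k : Fin n → ℤ,
            U k * Complex.exp (Complex.I * ((∑ i, (k i : ℝ) * (θ i + ω i) : ℝ) : ℂ)))
            = ∑ k ∈ bigS n K, U k *
                (Complex.exp (Complex.I * ((∑ i, (k i : ℝ) * ω i : ℝ) : ℂ)) *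
                  Complex.exp (Complex.I * ∑ i, (k i : ℂ) * θ i)) := by
          rw [tsum_eq_sum (s := bigS n K)
            (fun k hk => by rw [hUsupp k (hmem k hk), zero_mul])]
          apply Finset.sum_congr rfl
          intro k _
          congr 1
          rw [← Complex.exp_add]
          congr 1
          push_cast
          rw [← mul_add, ← Finset.sum_add_distrib]
          congr 1
          apply Finset.sum_congr rfl
          intro i _
          ring
        have h2 : (∑' k : Fin n → ℤ,
            U k * Complex.exp (Complex.I * ((∑ i, (k i : ℝ) * θ i : ℝ) : ℂ)))
            = ∑ k ∈ bigS n K, U k * Complex.exp (Complex.I * ∑ i, (k i : ℂ) * θ i) := by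
          rw [tsum_eq_sum (s := bigS n K)
            (fun k hk => by rw [hUsupp k (hmem k hk), zero_mul])]
          exact Finset.sum_congr rfl fun k _ => by rw [hcast]
        have h3 : (∑' k : Fin n → ℤ,
            c k * Complex.exp (Complex.I * ((∑ i, (k i : ℝ) * θ i : ℝ) : ℂ)))
            = ∑ k ∈ bigS n K, c k * Complex.exp (Complex.I * ∑ i, (k i : ℂ) * θ i) := by
          rw [tsum_eq_sum (s := bigS n K)
            (fun k hk => by rw [hc k (hmem k hk), zero_mul])]
          exact Finset.sum_congr rfl fun k _ => by rw [hcast]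
        have h := heq θ
        rw [h1, h2, h3] at h
        rw [show (∑ k ∈ bigS n K, (U k *
              (Complex.exp (Complex.I * ((∑ i, (k i : ℝ) * ω i : ℝ) : ℂ)) - 1) - c k) *
            Complex.exp (Complex.I * ∑ i, (k i : ℂ) * θ i))
          = (∑ k ∈ bigS n K, U k *
                (Complex.exp (Complex.I * ((∑ i, (k i : ℝ) * ω i : ℝ) : ℂ)) *
                  Complex.exp (Complex.I * ∑ i, (k i : ℂ) * θ i)))
            - (∑ k ∈ bigS n K, U k * Complex.exp (Complex.I * ∑ i, (k i : ℂ) * θ i))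
            - (∑ k ∈ bigS n K, c k * Complex.exp (Complex.I * ∑ i, (k i : ℂ) * θ i)) by
            rw [← Finset.sum_sub_distrib, ← Finset.sum_sub_distrib]
            exact Finset.sum_congr rfl fun k _ => by ring]
        rw [h]
        exact sub_self _
      have hzero := coeff_eq_zero _ _ claim
      funext k
      by_cases hP : 0 < (∑ i, |(k i : ℝ)|) ∧ (∑ i, |(k i : ℝ)|) ≤ K
      · have hk := hzero k (mem_bigS hP.2)
        have hne := hdne k hP.1 hP.2
        rw [homSol, if_pos hP, eq_div_iff hne]
        exact sub_eq_zero.mp hk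
      · rw [hUsupp k hP, homSol, if_neg hP]
    · intro hU
      subst hU
      refine ⟨fun k hk => by rw [homSol, if_neg hk], ?_⟩
      intro θ
      have hmem : ∀ k : Fin n → ℤ, k ∉ bigS n K →
          ¬(0 < (∑ i, |(k i : ℝ)|) ∧ (∑ i, |(k i : ℝ)|) ≤ K) := by
        intro k hk hP
        exact hk (mem_bigS hP.2)
      have hSsupp : ∀ k : Fin n → ℤ, k ∉ bigS n K → homSol n K ω c k = 0 :=
        fun k hk => by rw [homSol, if_neg (hmem k hk)]
      rw [tsum_eq_sum (s := bigS n K) (fun k hk => by rw [hSsupp k hk, zero_mul]),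
          tsum_eq_sum (s := bigS n K) (fun k hk => by rw [hSsupp k hk, zero_mul]),
          tsum_eq_sum (s := bigS n K) (fun k hk => by rw [hc k (hmem k hk), zero_mul]),
          ← Finset.sum_sub_distrib]
      apply Finset.sum_congr rfl
      intro k _
      have hsplit : Complex.exp (Complex.I * ((∑ i, (k i : ℝ) * (θ i + ω i) : ℝ) : ℂ))
          = Complex.exp (Complex.I * ((∑ i, (k i : ℝ) * ω i : ℝ) : ℂ)) *
            Complex.exp (Complex.I * ((∑ i, (k i : ℝ) * θ i : ℝ) : ℂ)) := by
        rw [← Complex.exp_add]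
        congr 1
        push_cast
        rw [← mul_add, ← Finset.sum_add_distrib]
        congr 1
        apply Finset.sum_congr rfl
        intro i _
        ring
      rw [hsplit]
      by_cases hP : 0 < (∑ i, |(k i : ℝ)|) ∧ (∑ i, |(k i : ℝ)|) ≤ K
      · rw [homSol, if_pos hP]
        have hne := hdne k hP.1 hP.2
        have hgoal : ∀ (ck E e : ℂ), E - 1 ≠ 0 →
            ck / (E - 1) * (E * e) - ck / (E - 1) * e = ck * e := by
          intro ck E e h
          field_simp
        exact hgoal _ _ _ hne
      · rw [homSol, if_neg hP, hc k hP]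
        ring
  · -- part (c)
    intro M a hM ha hbound b hb hba θ hθ
    have hmem : ∀ k : Fin n → ℤ, k ∉ bigS n K →
        ¬(0 < (∑ i, |(k i : ℝ)|) ∧ (∑ i, |(k i : ℝ)|) ≤ K) := by
      intro k hk hP
      exact hk (mem_bigS hP.2)
    have hC : 0 ≤ (π / 2) * γ⁻¹ * M := by positivity
    rw [tsum_eq_sum (s := bigS n K)
        (fun k hk => by rw [homSol, if_neg (hmem k hk), zero_mul]),
      tsum_eq_sum (s := bigS n K) (fun k hk => by rw [if_neg (hmem k hk)])]
    calc ‖∑ k ∈ bigS n K, homSol n K ω c k *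
            Complex.exp (Complex.I * ∑ i, (k i : ℂ) * θ i)‖
        ≤ ∑ k ∈ bigS n K, ‖homSol n K ω c k *
            Complex.exp (Complex.I * ∑ i, (k i : ℂ) * θ i)‖ := norm_sum_le _ _
      _ ≤ ∑ k ∈ bigS n K, (π / 2) * γ⁻¹ * M *
            (if 0 < (∑ i, |(k i : ℝ)|) ∧ (∑ i, |(k i : ℝ)|) ≤ K then
              (∑ i, |(k i : ℝ)|) ^ τ * Real.exp (-((∑ i, |(k i : ℝ)|) * (a - b)))
            else 0) := by
          apply Finset.sum_le_sum
          intro k _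
          by_cases hP : 0 < (∑ i, |(k i : ℝ)|) ∧ (∑ i, |(k i : ℝ)|) ≤ K
          · rw [if_pos hP]
            set nk : ℝ := ∑ i, |(k i : ℝ)| with hnk
            have hnk0 : 0 < nk := hP.1
            -- bound on the exponential factor
            have hexp : ‖Complex.exp (Complex.I * ∑ i, (k i : ℂ) * θ i)‖
                ≤ Real.exp (nk * b) := by
              rw [Complex.norm_exp]
              apply Real.exp_le_exp.mpr
              have him : (Complex.I * ∑ i, (k i : ℂ) * θ i).re
                  = -(∑ i, (k i : ℝ) * (θ i).im) := by
                rw [Complex.mul_re, Complex.I_re, Complex.I_im, Complex.im_sum]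
                simp only [Complex.mul_im]
                push_cast
                simp [Complex.mul_im, Complex.intCast_re, Complex.intCast_im]
              rw [him]
              calc -(∑ i, (k i : ℝ) * (θ i).im) ≤ |∑ i, (k i : ℝ) * (θ i).im| :=
                    neg_le_abs _
                _ ≤ ∑ i, |(k i : ℝ) * (θ i).im| := Finset.abs_sum_le_sum_abs _ _
                _ ≤ ∑ i, |(k i : ℝ)| * b := by
                    apply Finset.sum_le_sum
                    intro i _
                    rw [abs_mul]
                    apply mul_le_mul_of_nonneg_left _ (abs_nonneg _)
                    exact le_trans (Finset.single_le_sum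
                      (f := fun j => |(θ j).im|) (fun j _ => abs_nonneg _)
                      (Finset.mem_univ i)) hθ
                _ = nk * b := by rw [hnk, Finset.sum_mul]
            -- bound on the coefficient
            have hEnorm := parta k hP.1 hP.2
            have hEpos : 0 < (2 / π) * γ * nk ^ (-τ) := by
              apply mul_pos (mul_pos (by positivity) hγ) (Real.rpow_pos_of_pos hnk0 _)
            have hcoef : ‖homSol n K ω c k‖
                ≤ M * Real.exp (-(nk * a)) / ((2 / π) * γ * nk ^ (-τ)) := by
              rw [homSol, if_pos hP, norm_div]
              apply div_le_div₀ (by positivity) (hbound k) hEpos hEnorm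
            have key : M * Real.exp (-(nk * a)) / ((2 / π) * γ * nk ^ (-τ)) *
                Real.exp (nk * b)
                = (π / 2) * γ⁻¹ * M * (nk ^ τ * Real.exp (-(nk * (a - b)))) := by
              have he : Real.exp (-(nk * (a - b)))
                  = Real.exp (-(nk * a)) * Real.exp (nk * b) := by
                rw [← Real.exp_add]
                ring_nf
              rw [he, Real.rpow_neg hnk0.le]
              have hτpos : (0:ℝ) < nk ^ τ := Real.rpow_pos_of_pos hnk0 _
              field_simp
            calc ‖homSol n K ω c k * Complex.exp (Complex.I * ∑ i, (k i : ℂ) * θ i)‖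
                = ‖homSol n K ω c k‖ * ‖Complex.exp (Complex.I * ∑ i, (k i : ℂ) * θ i)‖ :=
                  norm_mul _ _
              _ ≤ M * Real.exp (-(nk * a)) / ((2 / π) * γ * nk ^ (-τ)) *
                    Real.exp (nk * b) := by
                  apply mul_le_mul hcoef hexp (norm_nonneg _) (by positivity)
              _ = (π / 2) * γ⁻¹ * M * (nk ^ τ * Real.exp (-(nk * (a - b)))) := key
          · rw [if_neg hP, mul_zero, homSol, if_neg hP, zero_mul, norm_zero]
      _ = (π / 2) * γ⁻¹ * M *
            ∑ k ∈ bigS n K,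
              (if 0 < (∑ i, |(k i : ℝ)|) ∧ (∑ i, |(k i : ℝ)|) ≤ K then
                (∑ i, |(k i : ℝ)|) ^ τ * Real.exp (-((∑ i, |(k i : ℝ)|) * (a - b)))
              else 0) := by rw [Finset.mul_sum]
end
end

section
/- Weak convexity forces closeness of successive frequency-equation solutions (core estimate of Lemma 4.5 and Lemma 5.2). Let B ⊂ ℝⁿ, let ϖ₂ be a modulus of continuity, and let ω : B → ℝⁿ satisfy |ω(x) − ω(y)| ≥ ϖ₂(|x − y|) for all x, y ∈ B with 0 < |x − y| ≤ 1. Let ν ≥ 0 and let g₀, …, g_ν : B → ℝⁿ be functions such that |g_i(x) − g_i(y)| ≤ L_i |x − y| for all x, y ∈ B with |x − y| ≤ 1 (0 ≤ i ≤ ν), and assume (Σ_{i=0}^{ν−1} L_i) · x ≤ ϖ₂(x)/2 for all x ∈ (0,1]. If a, b ∈ B with 0 < |a − b| ≤ 1 satisfy ω(a) + Σ_{i=0}^{ν−1} g_i(a) = ω(b) + Σ_{i=0}^{ν} g_i(b), then ϖ₂(|a − b|) ≤ 2 |g_ν(b)|. -/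
open scoped Real

noncomputable section

/-- A modulus of continuity: a strictly increasing continuous function on `(0,∞)`,
positive there, tending to `0` at `0⁺`, with `limsup_{x→0⁺} x/ϖ(x) < ∞`. -/
def IsModulusOfContinuity (ϖ : ℝ → ℝ) : Prop :=
  StrictMonoOn ϖ (Set.Ioi 0) ∧ ContinuousOn ϖ (Set.Ioi 0) ∧ (∀ x > 0, 0 < ϖ x) ∧
  Filter.Tendsto ϖ (nhdsWithin 0 (Set.Ioi 0)) (nhds 0) ∧
  ∃ C > 0, ∀ᶠ x in nhdsWithin 0 (Set.Ioi 0), x ≤ C * ϖ x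

/-- Core estimate of Lemma 4.5/5.2: weak convexity of the frequency map forces
closeness of successive solutions of the frequency equation (ℓ¹ norms throughout). -/
theorem weak_convexity_frequency_estimate
    (n : ℕ) (B : Set (Fin n → ℝ)) (ϖ₂ : ℝ → ℝ) (h2 : IsModulusOfContinuity ϖ₂)
    (ω : (Fin n → ℝ) → (Fin n → ℝ))
    (hω : ∀ x ∈ B, ∀ y ∈ B, 0 < (∑ i, |x i - y i|) → (∑ i, |x i - y i|) ≤ 1 →
      ϖ₂ (∑ i, |x i - y i|) ≤ ∑ j, |ω x j - ω y j|)
    (ν : ℕ) (g : ℕ → (Fin n → ℝ) → (Fin n → ℝ)) (L : ℕ → ℝ)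
    (hg : ∀ i ≤ ν, ∀ x ∈ B, ∀ y ∈ B, (∑ i', |x i' - y i'|) ≤ 1 →
      (∑ j, |g i x j - g i y j|) ≤ L i * ∑ i', |x i' - y i'|)
    (hL : ∀ x : ℝ, 0 < x → x ≤ 1 → (∑ i ∈ Finset.range ν, L i) * x ≤ ϖ₂ x / 2)
    (a b : Fin n → ℝ) (ha : a ∈ B) (hb : b ∈ B)
    (hab : 0 < ∑ i, |a i - b i|) (hab1 : (∑ i, |a i - b i|) ≤ 1)
    (heq : ∀ j, ω a j + (∑ i ∈ Finset.range ν, g i a j)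
              = ω b j + ∑ i ∈ Finset.range (ν + 1), g i b j) :
    ϖ₂ (∑ i, |a i - b i|) ≤ 2 * ∑ j, |g ν b j| := by
  set d := ∑ i, |a i - b i| with hd
  have hba : (∑ i', |b i' - a i'|) = d := by
    simp only [hd]; exact Finset.sum_congr rfl fun i _ => abs_sub_comm _ _
  have h1 := hω a ha b hb hab hab1
  have key : ∀ j, ω a j - ω b j
      = (∑ i ∈ Finset.range ν, (g i b j - g i a j)) + g ν b j := by
    intro j
    have h := heq j
    rw [Finset.sum_range_succ] at h
    rw [Finset.sum_sub_distrib]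
    linarith
  have hsum : (∑ j, |ω a j - ω b j|)
      ≤ (∑ i ∈ Finset.range ν, L i) * d + ∑ j, |g ν b j| := by
    calc ∑ j, |ω a j - ω b j|
        ≤ ∑ j, ((∑ i ∈ Finset.range ν, |g i b j - g i a j|) + |g ν b j|) := by
          refine Finset.sum_le_sum fun j _ => ?_
          rw [key j]
          exact (abs_add_le _ _).trans (by gcongr; exact Finset.abs_sum_le_sum_abs _ _)
      _ = (∑ i ∈ Finset.range ν, ∑ j, |g i b j - g i a j|) + ∑ j, |g ν b j| := by
          rw [Finset.sum_add_distrib, Finset.sum_comm]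
      _ ≤ (∑ i ∈ Finset.range ν, L i * d) + ∑ j, |g ν b j| := by
          gcongr with i hi
          have h := hg i (Nat.le_of_lt (Finset.mem_range.mp hi)) b hb a ha
            (by rw [hba]; exact hab1)
          rwa [hba] at h
      _ = (∑ i ∈ Finset.range ν, L i) * d + ∑ j, |g ν b j| := by
          rw [Finset.sum_mul]
  have hh := hL d hab hab1
  linarith
end
end
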